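/- Define f : ℝ³ → ℝ³ by f¹(u) = ½(u₂u₃ − u₁u₂ − u₁u₃) and its cyclic permutations, and set a(u) = u₁ + u₂ + u₃, b(u) = −½(u₁u₂ + u₂u₃ + u₃u₁), c(u) = u₁u₂u₃, and F(u) = b(u)² − a(u)c(u). Then for every u ∈ ℝ³ and every i ∈ {1,2,3}: ∂F/∂uᵢ = Σ_k (∂c/∂u_k)(∂f^k/∂uᵢ). That is, σ₅ = c dx + (b² − ac) dt is a conservation law of the Hamiltonian system with flux f. -/

import Mathlib

set_option maxHeartbeats 1000000


/-- For the Hamiltonian system on `ℝ³` with flux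
`f¹ = ½(u₂u₃ − u₁u₂ − u₁u₃)` and cyclic permutations, setting
`a = u₁ + u₂ + u₃`, `b = −½(u₁u₂ + u₂u₃ + u₃u₁)`, `c = u₁u₂u₃`, and
`F = b² − ac`, one has `∂F/∂uᵢ = Σ_k (∂c/∂u_k)(∂f^k/∂uᵢ)` for every `u` and
every `i`: that is, `σ₅ = c dx + (b² − ac) dt` is a conservation law of the
Hamiltonian system with flux `f`. -/
theorem stmt_14
    (f : (Fin 3 → ℝ) → (Fin 3 → ℝ))
    (hf : ∀ u : Fin 3 → ℝ, f u =
      ![(1 / 2) * (u 1 * u 2 - u 0 * u 1 - u 0 * u 2),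
        (1 / 2) * (u 2 * u 0 - u 1 * u 2 - u 1 * u 0),
        (1 / 2) * (u 0 * u 1 - u 2 * u 0 - u 2 * u 1)])
    (a b c F : (Fin 3 → ℝ) → ℝ)
    (ha : ∀ u : Fin 3 → ℝ, a u = u 0 + u 1 + u 2)
    (hb : ∀ u : Fin 3 → ℝ, b u = -(1 / 2) * (u 0 * u 1 + u 1 * u 2 + u 2 * u 0))
    (hc : ∀ u : Fin 3 → ℝ, c u = u 0 * u 1 * u 2)
    (hF : ∀ u : Fin 3 → ℝ, F u = (b u) ^ 2 - a u * c u) :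
    ∀ u : Fin 3 → ℝ, ∀ i : Fin 3,
      fderiv ℝ F u (Pi.single i 1) =
        ∑ k : Fin 3, fderiv ℝ c u (Pi.single k 1) *
          fderiv ℝ (fun x => f x k) u (Pi.single i 1) := by
  intro u i
  have h0 : HasFDerivAt (fun v : Fin 3 → ℝ => v 0)
      (ContinuousLinearMap.proj (R := ℝ) (φ := fun _ : Fin 3 => ℝ) 0) u :=
    hasFDerivAt_apply 0 u
  have h1 : HasFDerivAt (fun v : Fin 3 → ℝ => v 1)
      (ContinuousLinearMap.proj (R := ℝ) (φ := fun _ : Fin 3 => ℝ) 1) u :=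
    hasFDerivAt_apply 1 u
  have h2 : HasFDerivAt (fun v : Fin 3 → ℝ => v 2)
      (ContinuousLinearMap.proj (R := ℝ) (φ := fun _ : Fin 3 => ℝ) 2) u :=
    hasFDerivAt_apply 2 u
  -- derivative of c
  have hcfun : c = fun v : Fin 3 → ℝ => v 0 * v 1 * v 2 := funext fun v => hc v
  have hcD := ((h0.mul h1).mul h2)
  rw [hcfun] at *
  -- derivative of F
  have hFfun : F = fun v : Fin 3 → ℝ =>
      (-(1 / 2) * (v 0 * v 1 + v 1 * v 2 + v 2 * v 0)) *
        (-(1 / 2) * (v 0 * v 1 + v 1 * v 2 + v 2 * v 0)) -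
      (v 0 + v 1 + v 2) * (v 0 * v 1 * v 2) := by
    funext v; rw [hF, sq, hb, ha, hc]
  have hbD := (((h0.mul h1).add (h1.mul h2)).add (h2.mul h0)).const_mul (-(1 / 2) : ℝ)
  have haD := (h0.add h1).add h2
  have hFD := (hbD.mul hbD).sub (haD.mul hcD)
  have hFderiv := hFD.fderiv
  have hcderiv := hcD.fderiv
  -- derivatives of the components of f
  have hf0 : (fun x => f x 0) = fun v : Fin 3 → ℝ =>
      (1 / 2) * (v 1 * v 2 - v 0 * v 1 - v 0 * v 2) := by
    funext v; rw [hf]; simp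
  have hf1 : (fun x => f x 1) = fun v : Fin 3 → ℝ =>
      (1 / 2) * (v 2 * v 0 - v 1 * v 2 - v 1 * v 0) := by
    funext v; rw [hf]; simp
  have hf2 : (fun x => f x 2) = fun v : Fin 3 → ℝ =>
      (1 / 2) * (v 0 * v 1 - v 2 * v 0 - v 2 * v 1) := by
    funext v; rw [hf]; simp
  have hf0D := (((h1.mul h2).sub (h0.mul h1)).sub (h0.mul h2)).const_mul ((1 : ℝ) / 2)
  have hf1D := (((h2.mul h0).sub (h1.mul h2)).sub (h1.mul h0)).const_mul ((1 : ℝ) / 2)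
  have hf2D := (((h0.mul h1).sub (h2.mul h0)).sub (h2.mul h1)).const_mul ((1 : ℝ) / 2)
  rw [hFfun] at *
  simp only [Pi.mul_def, Pi.add_def, Pi.sub_def] at hFderiv hcderiv hf0D hf1D hf2D
  rw [hFderiv, hcderiv, Fin.sum_univ_three, hf0, hf1, hf2,
    hf0D.fderiv, hf1D.fderiv, hf2D.fderiv]
  fin_cases i <;>
    simp only [ContinuousLinearMap.add_apply, ContinuousLinearMap.sub_apply,
      ContinuousLinearMap.smul_apply, ContinuousLinearMap.coe_smul',
      Pi.smul_apply, ContinuousLinearMap.proj_apply, smul_eq_mul,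
      Pi.single_apply] <;>
    norm_num [Fin.ext_iff] <;> ring
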